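/- Suppose |S| ≥ |T|. Then there exist point beliefs π : T → Δ(S) satisfying convex independence and ε > 0 such that every family of beliefs Π (with each Π(t) a nonempty compact convex subset of Δ(S)) satisfying d_H(Π(t), {π(t)}) < ε for all t ∈ T satisfies set-valued convex independence: Π(t) ∩ closedConvexHull(⋃_{s ≠ t} Π(s)) = ∅ for every t ∈ T. -/

import Mathlib

noncomputable section

/-- A closed half-space bound: the closure of the convex hull of a set where the
coordinate `i` is at most `c` also satisfies the bound. -/
lemma halfspace_bound {S : Type*} [Fintype S] (i : S) (c : ℝ) (A : Set (S → ℝ))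
    (hA : ∀ y ∈ A, y i ≤ c) : ∀ x ∈ closure (convexHull ℝ A), x i ≤ c := by
  have hconv : Convex ℝ {y : S → ℝ | y i ≤ c} :=
    convex_halfSpace_le (f := fun y : S → ℝ => y i) (LinearMap.isLinear (LinearMap.proj (R := ℝ) (φ := fun _ : S => ℝ) i)) c
  have hclosed : IsClosed {y : S → ℝ | y i ≤ c} :=
    isClosed_le (continuous_apply i) continuous_const
  have h1 : convexHull ℝ A ⊆ {y : S → ℝ | y i ≤ c} := convexHull_min hA hconv
  have h2 : closure (convexHull ℝ A) ⊆ {y : S → ℝ | y i ≤ c} :=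
    closure_minimal h1 hclosed
  exact fun x hx => h2 hx

theorem stmt_17 {S T : Type*} [Fintype S] [Fintype T] [Nonempty S] [Nonempty T]
    (hST : Fintype.card T ≤ Fintype.card S) :
    ∃ p : T → (S → ℝ), (∀ t, p t ∈ stdSimplex ℝ S) ∧
      (∀ t : T, p t ∉ closure (convexHull ℝ (p '' {s | s ≠ t}))) ∧
      ∃ ε : ℝ, 0 < ε ∧
        ∀ P : T → Set (S → ℝ),
          (∀ t, (P t).Nonempty ∧ IsCompact (P t) ∧ Convex ℝ (P t) ∧ P t ⊆ stdSimplex ℝ S) →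
          (∀ t, Metric.hausdorffDist (P t) {p t} < ε) →
          ∀ t : T, P t ∩ closure (convexHull ℝ (⋃ s ∈ {s : T | s ≠ t}, P s)) = ∅ := by
  classical
  obtain ⟨f⟩ := Function.Embedding.nonempty_of_card_le hST
  set p : T → (S → ℝ) := fun t s => if s = f t then 1 else 0 with hp
  have hps : ∀ t, p t (f t) = 1 := fun t => by simp [hp]
  have hps' : ∀ s t, s ≠ t → p s (f t) = 0 := by
    intro s t hst
    have : f t ≠ f s := fun h => hst (f.injective h).symm
    simp [hp, this]
  refine ⟨p, ?_, ?_, 1/3, by norm_num, ?_⟩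
  · intro t
    constructor
    · intro s; simp only [hp]; split <;> norm_num
    · simp [hp, Finset.sum_ite_eq' Finset.univ (f t)]
  · intro t ht
    have := halfspace_bound (f t) 0 (p '' {s | s ≠ t}) ?_ _ ht
    · rw [hps t] at this; linarith
    · rintro y ⟨s, hs, rfl⟩
      exact le_of_eq (hps' s t hs)
  · intro P hP hd t
    ext x
    simp only [Set.mem_inter_iff, Set.mem_empty_iff_false, iff_false, not_and]
    intro hxP hxC
    -- every point of P s is within 1/3 of p s
    have key : ∀ s : T, ∀ y ∈ P s, dist y (p s) < 1/3 := by
      intro s y hy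
      obtain ⟨hne, hcpt, _, _⟩ := hP s
      have hfin : EMetric.hausdorffEdist (P s) {p s} ≠ ⊤ :=
        Metric.hausdorffEdist_ne_top_of_nonempty_of_bounded hne ⟨p s, rfl⟩
          hcpt.isBounded Bornology.isBounded_singleton
      obtain ⟨z, hz, hdz⟩ := Metric.exists_dist_lt_of_hausdorffDist_lt hy (hd s) hfin
      rcases hz with rfl
      exact hdz
    -- x (f t) > 2/3
    have hx1 : (2:ℝ)/3 < x (f t) := by
      have h := key t x hxP
      have hle : dist (x (f t)) (p t (f t)) ≤ dist x (p t) := dist_le_pi_dist x (p t) (f t)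
      rw [hps t, Real.dist_eq] at hle
      have habs : |x (f t) - 1| < 1/3 := lt_of_le_of_lt hle h
      linarith [(abs_lt.mp habs).1, (abs_lt.mp habs).2]
    -- x (f t) ≤ 1/3 from the hull bound
    have hx2 : x (f t) ≤ 1/3 := by
      refine halfspace_bound (f t) (1/3) _ ?_ x hxC
      intro y hy
      simp only [Set.mem_iUnion] at hy
      obtain ⟨s, hs, hys⟩ := hy
      have h := key s y hys
      have hle : dist (y (f t)) (p s (f t)) ≤ dist y (p s) := dist_le_pi_dist y (p s) (f t)
      rw [hps' s t hs] at hle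
      have : |y (f t)| < 1/3 := by
        rw [Real.dist_eq, sub_zero] at hle; linarith [lt_of_le_of_lt hle h]
      linarith [abs_lt.mp this |>.2]
    linarith
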